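/- MacWilliams identity (Krawtchouk form): for a binary linear [n,k] code C with weight distribution A_i (number of codewords of weight i) and dual weight distribution A_w^⊥, one has for every 0 ≤ w ≤ n: ∑_{i=0}^{n} A_i · P_w(n,i) = 2^k · A_w^⊥, where P_w(n,i) = ∑_{j=0}^{w} (−1)^j · C(i,j) · C(n−i, w−j) is the Krawtchouk polynomial. -/

import Mathlib

/-- Hamming weight of a binary vector. -/
def wt {n : ℕ} (x : Fin n → ZMod 2) : ℕ :=
  (Finset.univ.filter fun i => x i ≠ 0).card

/-- Dual code with respect to the standard bilinear form. -/
def dualCode {n : ℕ} (C : Submodule (ZMod 2) (Fin n → ZMod 2)) :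
    Submodule (ZMod 2) (Fin n → ZMod 2) where
  carrier := {x | ∀ c ∈ C, ∑ i, x i * c i = 0}
  add_mem' := by
    intro a b ha hb c hc
    have ha' := ha c hc
    have hb' := hb c hc
    simp only [Set.mem_setOf_eq, Pi.add_apply, add_mul] at *
    rw [Finset.sum_add_distrib, ha', hb', add_zero]
  zero_mem' := by
    intro c hc
    simp
  smul_mem' := by
    intro r a ha c hc
    have ha' := ha c hc
    simp only [Set.mem_setOf_eq, Pi.smul_apply, smul_eq_mul, mul_assoc] at *
    rw [← Finset.mul_sum, ha', mul_zero]

/-- Minimum distance (minimum nonzero Hamming weight) of a binary linear code. -/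
noncomputable def minDist {n : ℕ} (C : Submodule (ZMod 2) (Fin n → ZMod 2)) : ℕ :=
  sInf {w | ∃ c ∈ C, c ≠ 0 ∧ wt c = w}

/-- Number of codewords of weight `w` in `C` (the weight distribution `A_w`). -/
noncomputable def wtCount {n : ℕ} (C : Submodule (ZMod 2) (Fin n → ZMod 2)) (w : ℕ) : ℕ :=
  Nat.card {c : Fin n → ZMod 2 // c ∈ C ∧ wt c = w}

/-- Krawtchouk polynomial value P_w(n, i). -/
def kraw (n w i : ℕ) : ℤ :=
  ∑ j ∈ Finset.range (w + 1),
    (-1) ^ j * (Nat.choose i j : ℤ) * (Nat.choose (n - i) (w - j) : ℤ)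

open Finset

namespace MacWAux

/-- The sign character of `ZMod 2`. -/
def chi : ZMod 2 → ℤ := fun a => if a = 0 then 1 else -1

lemma chi_add : ∀ a b : ZMod 2, chi (a + b) = chi a * chi b := by decide

lemma chi_zero : chi 0 = 1 := rfl

lemma chi_natCast (m : ℕ) : chi (m : ZMod 2) = (-1) ^ m := by
  induction m with
  | zero => simp [chi]
  | succ m ih =>
    push_cast
    rw [chi_add, ih, pow_succ]
    norm_num [chi]

/-- Support of a binary vector. -/
def supp {n : ℕ} (x : Fin n → ZMod 2) : Finset (Fin n) :=
  Finset.univ.filter fun i => x i ≠ 0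

lemma wt_eq_card_supp {n : ℕ} (x : Fin n → ZMod 2) : wt x = (supp x).card := rfl

lemma inner_eq {n : ℕ} (x c : Fin n → ZMod 2) :
    ∑ i, x i * c i = (((supp x ∩ supp c).card : ℕ) : ZMod 2) := by
  have h1 : ∀ a : ZMod 2, a ≠ 0 → a = 1 := by decide
  rw [← Finset.sum_subset (Finset.subset_univ (supp x ∩ supp c))
      (fun i _ hi => ?_)]
  · rw [Finset.sum_congr rfl (fun i hi => ?_), Finset.sum_const, nsmul_eq_mul, mul_one]
    simp only [supp, Finset.mem_inter, Finset.mem_filter, Finset.mem_univ, true_and] at hi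
    rw [h1 _ hi.1, h1 _ hi.2, mul_one]
  · simp only [supp, Finset.mem_inter, Finset.mem_filter, Finset.mem_univ, true_and,
      not_and, not_not] at hi
    by_cases hx : x i = 0
    · rw [hx, zero_mul]
    · rw [hi hx, mul_zero]

lemma chi_inner {n : ℕ} (x c : Fin n → ZMod 2) :
    chi (∑ i, x i * c i) = (-1 : ℤ) ^ ((supp x ∩ supp c).card) := by
  rw [inner_eq, chi_natCast]


lemma mem_dual {n : ℕ} {C : Submodule (ZMod 2) (Fin n → ZMod 2)} {x : Fin n → ZMod 2} :
    x ∈ dualCode C ↔ ∀ c ∈ C, ∑ i, x i * c i = 0 := Iff.rfl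

lemma char_sum {n : ℕ} (C : Submodule (ZMod 2) (Fin n → ZMod 2)) (x : Fin n → ZMod 2)
    [DecidablePred (· ∈ C)] [Decidable (x ∈ dualCode C)] :
    ∑ c ∈ univ.filter (· ∈ C), chi (∑ i, x i * c i) =
      if x ∈ dualCode C then ((univ.filter (· ∈ C)).card : ℤ) else 0 := by
  split_ifs with h
  · rw [Finset.sum_congr rfl (fun c hc => ?_), Finset.sum_const, nsmul_eq_mul, mul_one]
    rw [mem_dual.mp h c (mem_filter.mp hc).2, chi_zero]
  · rw [mem_dual] at h
    push_neg at h
    obtain ⟨c₀, hc₀C, hne⟩ := h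
    have h1 : ∑ i, x i * c₀ i = 1 := by
      have h2 : ∀ a : ZMod 2, a ≠ 0 → a = 1 := by decide
      exact h2 _ hne
    have key : ∑ c ∈ univ.filter (· ∈ C), chi (∑ i, x i * c i)
        = ∑ c ∈ univ.filter (· ∈ C), (- chi (∑ i, x i * c i)) := by
      refine Finset.sum_nbij' (fun c => c + c₀) (fun c => c + c₀) ?_ ?_ ?_ ?_ ?_
      · intro a ha
        simp only [mem_filter, mem_univ, true_and] at *
        exact C.add_mem ha hc₀C
      · intro a ha
        simp only [mem_filter, mem_univ, true_and] at *
        exact C.add_mem ha hc₀C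
      · intro a _
        funext i
        simp [add_assoc, CharTwo.add_self_eq_zero]
      · intro a _
        funext i
        simp [add_assoc, CharTwo.add_self_eq_zero]
      · intro a _
        have hsplit : ∑ i, x i * (a + c₀) i = (∑ i, x i * a i) + ∑ i, x i * c₀ i := by
          simp [Pi.add_apply, mul_add, Finset.sum_add_distrib]
        rw [hsplit, h1, chi_add]
        norm_num [chi]
    have hneg : ∑ c ∈ univ.filter (· ∈ C), (- chi (∑ i, x i * c i))
        = - ∑ c ∈ univ.filter (· ∈ C), chi (∑ i, x i * c i) := by
      rw [Finset.sum_neg_distrib]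
    rw [hneg] at key
    linarith

lemma count_inter {n : ℕ} (T : Finset (Fin n)) {w j : ℕ} (hj : j ≤ w) :
    ((univ.powersetCard w).filter fun S : Finset (Fin n) => (S ∩ T).card = j).card
      = T.card.choose j * (Tᶜ.card).choose (w - j) := by
  rw [← card_powersetCard, ← card_powersetCard, ← card_product]
  refine Finset.card_nbij' (fun S => (S ∩ T, S \ T)) (fun p => p.1 ∪ p.2) ?_ ?_ ?_ ?_
  · intro S hS
    simp only [Finset.mem_coe, mem_filter, mem_powersetCard, mem_product] at *
    obtain ⟨⟨-, hcard⟩, hj'⟩ := hS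
    have hsd := Finset.card_inter_add_card_sdiff S T
    refine ⟨⟨inter_subset_right, hj'⟩, fun i hi => ?_, by omega⟩
    simp only [mem_sdiff, mem_compl] at *
    exact hi.2
  · intro p hp
    simp only [Finset.mem_coe, mem_product, mem_powersetCard, mem_filter] at *
    obtain ⟨⟨hA, hAcard⟩, hB, hBcard⟩ := hp
    have hBT : Disjoint p.2 T := Finset.disjoint_left.mpr fun a ha => by
      simpa using hB ha
    have hdisj : Disjoint p.1 p.2 :=
      Finset.disjoint_left.mpr fun a ha hb => (Finset.disjoint_left.mp hBT hb) (hA ha)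
    have hcu : (p.1 ∪ p.2).card = w := by
      rw [card_union_of_disjoint hdisj, hAcard, hBcard]; omega
    have h1 : (p.1 ∪ p.2) ∩ T = p.1 := by
      rw [union_inter_distrib_right, inter_eq_left.mpr hA,
        Finset.disjoint_iff_inter_eq_empty.mp hBT, union_empty]
    exact ⟨⟨subset_univ _, hcu⟩, by rw [h1, hAcard]⟩
  · intro S hS
    simp only
    rw [union_comm, sdiff_union_inter]
  · intro p hp
    simp only [Finset.mem_coe, mem_product, mem_powersetCard] at hp
    obtain ⟨⟨hA, hAcard⟩, hB, hBcard⟩ := hp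
    have hBT : Disjoint p.2 T := Finset.disjoint_left.mpr fun a ha => by
      simpa using hB ha
    have h1 : (p.1 ∪ p.2) ∩ T = p.1 := by
      rw [union_inter_distrib_right, inter_eq_left.mpr hA,
        Finset.disjoint_iff_inter_eq_empty.mp hBT, union_empty]
    have h2 : (p.1 ∪ p.2) \ T = p.2 := by
      rw [union_sdiff_distrib, sdiff_eq_empty_iff_subset.mpr hA, empty_union,
        Finset.sdiff_eq_self_iff_disjoint.mpr hBT]
    simp only
    exact Prod.ext h1 h2

lemma supp_indicator {n : ℕ} (S : Finset (Fin n)) :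
    supp (fun i => if i ∈ S then (1 : ZMod 2) else 0) = S := by
  ext i
  by_cases h : i ∈ S <;> simp [supp, h]

lemma kraw_sum {n : ℕ} (w : ℕ) (c : Fin n → ZMod 2) :
    ∑ x ∈ univ.filter (fun x : Fin n → ZMod 2 => wt x = w), chi (∑ i, x i * c i)
      = kraw n w (wt c) := by
  classical
  have step1 : ∑ x ∈ univ.filter (fun x : Fin n → ZMod 2 => wt x = w), chi (∑ i, x i * c i)
      = ∑ S ∈ univ.powersetCard w, (-1 : ℤ) ^ ((S ∩ supp c).card) := by
    refine Finset.sum_nbij' (fun x => supp x)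
      (fun S => fun i => if i ∈ S then (1 : ZMod 2) else 0) ?_ ?_ ?_ ?_ ?_
    · intro x hx
      simp only [mem_filter, mem_univ, true_and] at hx
      rw [mem_powersetCard]
      exact ⟨subset_univ _, hx⟩
    · intro S hS
      rw [mem_powersetCard] at hS
      simp only [mem_filter, mem_univ, true_and]
      rw [wt_eq_card_supp, supp_indicator, hS.2]
    · intro x _
      funext i
      simp only [supp, mem_filter, mem_univ, true_and]
      by_cases h : x i = 0
      · simp [h]
      · have h2 : ∀ a : ZMod 2, a ≠ 0 → a = 1 := by decide
        simp [h, h2 _ h]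
    · intro S _
      exact supp_indicator S
    · intro x _
      exact chi_inner x c
  rw [step1]
  have maps : ∀ S ∈ univ.powersetCard w,
      (S ∩ supp c).card ∈ Finset.range (w + 1) := by
    intro S hS
    rw [mem_powersetCard] at hS
    rw [mem_range]
    have h := Finset.card_le_card (Finset.inter_subset_left (s₁ := S) (s₂ := supp c))
    rw [hS.2] at h
    exact Nat.lt_succ_of_le h
  rw [← Finset.sum_fiberwise_of_maps_to maps (fun S => (-1 : ℤ) ^ ((S ∩ supp c).card))]
  unfold kraw
  refine Finset.sum_congr rfl fun j hj => ?_
  rw [mem_range] at hj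
  have hjw : j ≤ w := Nat.lt_succ_iff.mp hj
  have hinner : ∑ S ∈ (univ.powersetCard w).filter
        (fun S : Finset (Fin n) => (S ∩ supp c).card = j), (-1 : ℤ) ^ ((S ∩ supp c).card)
      = ∑ S ∈ (univ.powersetCard w).filter
        (fun S : Finset (Fin n) => (S ∩ supp c).card = j), (-1 : ℤ) ^ j := by
    refine Finset.sum_congr rfl fun S hS => ?_
    rw [(mem_filter.mp hS).2]
  rw [hinner, Finset.sum_const, count_inter (supp c) hjw, nsmul_eq_mul]
  have hcompl : (supp c)ᶜ.card = n - (supp c).card := by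
    rw [Finset.card_compl, Fintype.card_fin]
  rw [hcompl, ← wt_eq_card_supp]
  push_cast
  ring

end MacWAux

/-- The MacWilliams identities in Krawtchouk form. -/
theorem stmt_6 (n k : ℕ) (C : Submodule (ZMod 2) (Fin n → ZMod 2))
    (hk : Module.finrank (ZMod 2) C = k) (w : ℕ) (hw : w ≤ n) :
    ∑ i ∈ Finset.range (n + 1), (wtCount C i : ℤ) * kraw n w i =
      2 ^ k * (wtCount (dualCode C) w : ℤ) := by
  classical
  open MacWAux in
  have hwc : ∀ (D : Submodule (ZMod 2) (Fin n → ZMod 2)) (i : ℕ),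
      wtCount D i = ((univ.filter fun c : Fin n → ZMod 2 => c ∈ D ∧ wt c = i).card) := by
    intro D i
    rw [wtCount, Nat.card_eq_fintype_card, Fintype.card_subtype]
  have hcard : (((univ.filter (· ∈ C)).card : ℕ) : ℤ) = 2 ^ k := by
    have h1 : (univ.filter (· ∈ C)).card = Fintype.card C := by
      rw [Fintype.card_subtype]
    have h2 : Fintype.card C = Fintype.card (ZMod 2) ^ Module.finrank (ZMod 2) C :=
      Module.card_eq_pow_finrank
    rw [h1, h2, ZMod.card, hk]
    push_cast
    ring
  have hwt_le : ∀ c : Fin n → ZMod 2, wt c ≤ n := by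
    intro c
    have := Finset.card_le_card (Finset.subset_univ
      (univ.filter fun i => c i ≠ 0))
    simpa [wt] using this
  have maps : ∀ c ∈ univ.filter (· ∈ C), wt c ∈ Finset.range (n + 1) := by
    intro c _
    rw [mem_range]
    exact Nat.lt_succ_of_le (hwt_le c)
  calc ∑ i ∈ Finset.range (n + 1), (wtCount C i : ℤ) * kraw n w i
      = ∑ i ∈ Finset.range (n + 1), ∑ c ∈ (univ.filter (· ∈ C)).filter
          (fun c => wt c = i), kraw n w (wt c) := by
        refine Finset.sum_congr rfl fun i _ => ?_
        have hcongr : ∑ c ∈ (univ.filter (· ∈ C)).filter (fun c => wt c = i),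
            kraw n w (wt c) = ∑ c ∈ (univ.filter (· ∈ C)).filter (fun c => wt c = i),
            kraw n w i := by
          refine Finset.sum_congr rfl fun c hc => ?_
          rw [(mem_filter.mp hc).2]
        rw [hcongr, Finset.sum_const, nsmul_eq_mul, hwc, Finset.filter_filter]
    _ = ∑ c ∈ univ.filter (· ∈ C), kraw n w (wt c) :=
        Finset.sum_fiberwise_of_maps_to maps _
    _ = ∑ c ∈ univ.filter (· ∈ C), ∑ x ∈ univ.filter
          (fun x : Fin n → ZMod 2 => wt x = w), chi (∑ i, x i * c i) := by
        refine Finset.sum_congr rfl fun c _ => ?_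
        rw [kraw_sum]
    _ = ∑ x ∈ univ.filter (fun x : Fin n → ZMod 2 => wt x = w),
          ∑ c ∈ univ.filter (· ∈ C), chi (∑ i, x i * c i) := Finset.sum_comm
    _ = ∑ x ∈ univ.filter (fun x : Fin n → ZMod 2 => wt x = w),
          if x ∈ dualCode C then (((univ.filter (· ∈ C)).card : ℕ) : ℤ) else 0 := by
        refine Finset.sum_congr rfl fun x _ => ?_
        exact char_sum C x
    _ = 2 ^ k * (wtCount (dualCode C) w : ℤ) := by
        rw [← Finset.sum_filter, Finset.sum_const, nsmul_eq_mul, Finset.filter_filter, hcard]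
        have hset : (univ.filter fun x : Fin n → ZMod 2 => wt x = w ∧ x ∈ dualCode C)
            = (univ.filter fun x : Fin n → ZMod 2 => x ∈ dualCode C ∧ wt x = w) := by
          ext x
          simp [and_comm]
        rw [hset, ← hwc]
        ring
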